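/- Let R : ℕ × ℕ → ℕ be a total computable function such that μ(R(n,w)) = n for all n, w (i.e., R(n,w) ∈ B^n). Then there exists a computable coloring c : ℕ → Bool (two colors) such that for every positive integer w and every n < λ(w), c(w) ≠ c(R(n,w) + w). -/

import Mathlib

/-- `mu x = ⌊log₂ x⌋`, the exponent of the highest power of 2 in the binary expansion of `x`. -/
def mu (x : ℕ) : ℕ := Nat.log 2 x

/-- `lam x` is the 2-adic valuation of `x`, the exponent of the lowest power of 2
in the binary expansion of `x`. -/
def lam (x : ℕ) : ℕ := padicValNat 2 x

/-- `Bset n = B^n = {x ∈ ℤ⁺ : μ(x) = n}`. -/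
def Bset (n : ℕ) : Set ℕ := {x | 0 < x ∧ mu x = n}

/-- A set `A ⊆ ℤ⁺` has weak apartness if every `A ∩ B^m` has at most one element and
for every `l` there are at most two elements `x ∈ A` with `λ(x) = l`. -/
def WeakApart (A : Set ℕ) : Prop :=
  (∀ m, (A ∩ Bset m).Subsingleton) ∧
  (∀ l, ∀ x ∈ A, ∀ y ∈ A, ∀ z ∈ A,
    lam x = l → lam y = l → lam z = l → x = y ∨ x = z ∨ y = z)

/-- `FS A`: all finite sums of distinct elements of `A`. -/
def FS (A : Set ℕ) : Set ℕ :=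
  {n | ∃ F : Finset ℕ, ↑F ⊆ A ∧ F.Nonempty ∧ F.sum id = n}

/-- `FSle k A = FS^{≤k}(A)`: sums of at most `k` distinct elements of `A`. -/
def FSle (k : ℕ) (A : Set ℕ) : Set ℕ :=
  {n | ∃ F : Finset ℕ, ↑F ⊆ A ∧ F.Nonempty ∧ F.card ≤ k ∧ F.sum id = n}

/-- `A` is `Π⁰₃`: `x ∈ A ↔ ∀ y ∃ z ∀ w, R x y z w` for a computable relation `R`. -/
def Pi03 (A : Set ℕ) : Prop :=
  ∃ R : ℕ → ℕ → ℕ → ℕ → Bool,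
    Computable (fun p : ℕ × ℕ × ℕ × ℕ => R p.1 p.2.1 p.2.2.1 p.2.2.2) ∧
    ∀ x, x ∈ A ↔ ∀ y, ∃ z, ∀ w, R x y z w = true

/-- `A` is `Σ⁰₃`: `x ∈ A ↔ ∃ y ∀ z ∃ w, R x y z w` for a computable relation `R`. -/
def Sigma03 (A : Set ℕ) : Prop :=
  ∃ R : ℕ → ℕ → ℕ → ℕ → Bool,
    Computable (fun p : ℕ × ℕ × ℕ × ℕ => R p.1 p.2.1 p.2.2.1 p.2.2.2) ∧
    ∀ x, x ∈ A ↔ ∃ y, ∀ z, ∃ w, R x y z w = true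

/-- `A` is `Δ⁰₃` iff it is both `Σ⁰₃` and `Π⁰₃`. -/
def Delta03 (A : Set ℕ) : Prop := Sigma03 A ∧ Pi03 A

namespace HindmanAux

/-- Recursive interval coloring: `dcol R a k x` is the color of `x` relative to the
dyadic interval `[a, a + 2^k)`. -/
def dcol (R : ℕ → ℕ → ℕ) : ℕ → ℕ → ℕ → Bool
  | _, 0, _ => false
  | a, (k+1), x =>
      if x < a + 2^k then dcol R a k x
      else (dcol R (a + 2^k) k x == dcol R (a + 2^k) k (a + R k a))

lemma dcol_self (R : ℕ → ℕ → ℕ) : ∀ k a, dcol R a k a = false := by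
  intro k
  induction k with
  | zero => intro a; rfl
  | succ k ih =>
      intro a
      have h : a < a + 2^k := by
        have := pow_pos (show (0:ℕ) < 2 by norm_num) k
        omega
      simp [dcol, h, ih]

lemma dcol_flip (R : ℕ → ℕ → ℕ)
    (hlo : ∀ n w, 2^n ≤ R n w) (hhi : ∀ n w, R n w < 2^(n+1)) :
    ∀ k a w j, 0 < a → 2^k ∣ a → a ≤ w → w < a + 2^k → 2^(j+1) ∣ w →
      w + R j w < a + 2^k → dcol R a k w ≠ dcol R a k (w + R j w) := by
  intro k
  induction k with
  | zero =>
      intro a w j _ _ haw _ _ hxlt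
      exfalso
      have h1 : (1:ℕ) ≤ 2^j := Nat.one_le_two_pow
      have h2 := hlo j w
      simp only [pow_zero] at hxlt
      omega
  | succ k ih =>
      intro a w j ha hdvd haw hwlt hjw hxlt
      have hR1 : 2^j ≤ R j w := hlo j w
      have hR2 : R j w < 2^(j+1) := hhi j w
      have h2j : (1:ℕ) ≤ 2^j := Nat.one_le_two_pow
      have hwx : w < w + R j w := by omega
      have h2p : 2^(k+1) = 2^k + 2^k := by rw [pow_succ]; omega
      by_cases hx : w + R j w < a + 2^k
      · -- both in lower half
        have hw : w < a + 2^k := lt_trans hwx hx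
        simp only [dcol, if_pos hw, if_pos hx]
        exact ih a w j ha ((pow_dvd_pow 2 (Nat.le_succ k)).trans hdvd) haw hw hjw hx
      · push_neg at hx
        by_cases hw : w < a + 2^k
        · -- cross edge: show w = a and j = k
          have hjk : j ≤ k := by
            by_contra h
            push_neg at h
            have h3 : 2^(k+1) ≤ 2^j := Nat.pow_le_pow_right (by norm_num) h
            omega
          have hweq : w = a := by
            by_contra hne
            have hwa : 0 < w - a := by omega
            have hd1 : 2^(j+1) ∣ w - a :=
              Nat.dvd_sub hjw ((pow_dvd_pow 2 (by omega : j+1 ≤ k+1)).trans hdvd)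
            have hle : 2^(j+1) ≤ w - a := Nat.le_of_dvd hwa hd1
            have hjk' : j + 1 ≤ k := by
              by_contra h
              push_neg at h
              have hj' : j = k := by omega
              subst hj'
              omega
            have hd2 : 2^(j+1) ∣ (2^k - (w - a)) :=
              Nat.dvd_sub (pow_dvd_pow 2 hjk') hd1
            have hpos2 : 0 < 2^k - (w - a) := by omega
            have hle2 : 2^(j+1) ≤ 2^k - (w - a) := Nat.le_of_dvd hpos2 hd2
            omega
          subst hweq
          have hj2 : 2^k ≤ R j w := by omega
          have hjk2 : j = k := by
            have l1 : 2^k < 2^(j+1) := lt_of_le_of_lt hj2 hR2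
            have l2 : k < j + 1 := (Nat.pow_lt_pow_iff_right (by norm_num)).mp l1
            omega
          subst hjk2
          have hlow : w < w + 2^j := by omega
          have e1 : dcol R w (j+1) w = false := by
            simp [dcol, hlow, dcol_self]
          have e2 : dcol R w (j+1) (w + R j w) = true := by
            have hge : ¬ (w + R j w < w + 2^j) := by omega
            simp [dcol, hge]
          rw [e1, e2]
          simp
        · -- both in upper half
          push_neg at hw
          have hd' : 2^k ∣ a + 2^k :=
            dvd_add ((pow_dvd_pow 2 (Nat.le_succ k)).trans hdvd) dvd_rfl
          have hne := ih (a + 2^k) w j (by omega) hd' hw (by omega) hjw (by omega)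
          have hbw : ¬ (w < a + 2^k) := not_lt.mpr hw
          have hbx : ¬ (w + R j w < a + 2^k) := not_lt.mpr hx
          simp only [dcol, if_neg hbw, if_neg hbx]
          revert hne
          cases (dcol R (a + 2^k) k w) <;>
            cases (dcol R (a + 2^k) k (w + R j w)) <;>
              cases (dcol R (a + 2^k) k (a + R k a)) <;> simp

end HindmanAux

namespace HindmanAux

/-- helper: getD on a mapped range -/
lemma getD_map_range {α : Type*} (f : ℕ → α) {n i : ℕ} (h : i < n) (d : α) :
    ((List.range n).map f).getD i d = f i := by
  rw [List.getD_eq_getElem?_getD, List.getElem?_map, List.getElem?_range h]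
  rfl

/-- Table of `dcol` values over a dyadic interval. -/
def tabl (R : ℕ → ℕ → ℕ) (a k : ℕ) : List Bool :=
  (List.range (2^k)).map (fun i => dcol R a k (a + i))

lemma tabl_zero (R : ℕ → ℕ → ℕ) (a : ℕ) : tabl R a 0 = [false] := by
  simp [tabl, List.range_succ, dcol]

lemma tabl_succ (R : ℕ → ℕ → ℕ)
    (hlo : ∀ n w, 2^n ≤ R n w) (hhi : ∀ n w, R n w < 2^(n+1)) (a k : ℕ) :
    tabl R a (k+1) = tabl R a k ++
      (tabl R (a + 2^k) k).map
        (fun b => b == (tabl R (a + 2^k) k).getD (R k a - 2^k) false) := by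
  have hR1 : 2^k ≤ R k a := hlo k a
  have hR2 : R k a < 2^(k+1) := hhi k a
  have h2p : 2^(k+1) = 2^k + 2^k := by rw [pow_succ]; omega
  have hidx : R k a - 2^k < 2^k := by omega
  have hdelta : (tabl R (a + 2^k) k).getD (R k a - 2^k) false
      = dcol R (a + 2^k) k (a + R k a) := by
    rw [tabl, getD_map_range _ hidx]
    congr 1
    omega
  rw [hdelta]
  rw [tabl, h2p, List.range_add, List.map_append, List.map_map]
  congr 1
  · apply List.map_congr_left
    intro i hi
    have hi' : i < 2^k := List.mem_range.mp hi
    have hlt : a + i < a + 2^k := by omega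
    simp [dcol, hlt]
  · rw [tabl, List.map_map]
    apply List.map_congr_left
    intro i hi
    have hi' : i < 2^k := List.mem_range.mp hi
    have hge : ¬ (a + (2^k + i) < a + 2^k) := by omega
    simp only [Function.comp_apply, dcol, if_neg hge]
    congr 2
    omega

/-- The strong-recursion version of the tables, indexed by codes `(a+2^k)^2 + k`. -/
def fF (R : ℕ → ℕ → ℕ) (n : ℕ) : List Bool :=
  if 2^(n - n.sqrt * n.sqrt) ≤ n.sqrt then
    tabl R (n.sqrt - 2^(n - n.sqrt * n.sqrt)) (n - n.sqrt * n.sqrt)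
  else []

lemma fF_code (R : ℕ → ℕ → ℕ) (a k : ℕ) :
    fF R ((a + 2^k) * (a + 2^k) + k) = tabl R a k := by
  have hk2 : k < 2^k := Nat.lt_two_pow_self
  have hs : ((a + 2^k) * (a + 2^k) + k).sqrt = a + 2^k :=
    Nat.sqrt_add_eq _ (by omega)
  have hkk : (a + 2^k) * (a + 2^k) + k - (a + 2^k) * (a + 2^k) = k := by omega
  rw [fF, hs, hkk, if_pos (Nat.le_add_left (2^k) a), Nat.add_sub_cancel]

/-- One step of the strong recursion computing `fF`. -/
def gcore (R : ℕ → ℕ → ℕ) (n : ℕ) (L : List (List Bool)) : List Bool :=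
  if 2^(n - n.sqrt * n.sqrt) ≤ n.sqrt then
    (if n - n.sqrt * n.sqrt = 0 then [false]
     else
       L.getD ((n.sqrt - 2^(n - n.sqrt * n.sqrt - 1)) * (n.sqrt - 2^(n - n.sqrt * n.sqrt - 1))
           + (n - n.sqrt * n.sqrt - 1)) [] ++
       (L.getD (n.sqrt * n.sqrt + (n - n.sqrt * n.sqrt - 1)) []).map
         (fun b => b ==
           (L.getD (n.sqrt * n.sqrt + (n - n.sqrt * n.sqrt - 1)) []).getD
             (R (n - n.sqrt * n.sqrt - 1) (n.sqrt - 2^(n - n.sqrt * n.sqrt))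
               - 2^(n - n.sqrt * n.sqrt - 1)) false))
  else []

lemma gcore_eq (R : ℕ → ℕ → ℕ)
    (hlo : ∀ n w, 2^n ≤ R n w) (hhi : ∀ n w, R n w < 2^(n+1)) (n : ℕ) :
    gcore R n ((List.range n).map (fF R)) = fF R n := by
  rw [gcore, fF]
  set s := n.sqrt with hs
  set k := n - s * s with hk
  have hns : s * s ≤ n := Nat.sqrt_le n
  have hnk : n = s * s + k := by omega
  by_cases hv : 2^k ≤ s
  · rw [if_pos hv, if_pos hv]
    by_cases hk0 : k = 0
    · rw [if_pos hk0, hk0, pow_zero, tabl_zero]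
    · rw [if_neg hk0]
      obtain ⟨k', hkk⟩ : ∃ k', k = k' + 1 := ⟨k - 1, by omega⟩
      have h2p : 2^(k'+1) = 2^k' + 2^k' := by rw [pow_succ]; omega
      have h2k' : (1:ℕ) ≤ 2^k' := Nat.one_le_two_pow
      have hv' : 2^(k'+1) ≤ s := by rw [← hkk]; exact hv
      have hc2lt : s * s + k' < n := by omega
      have hc1lt : (s - 2^k') * (s - 2^k') + k' < n := by
        obtain ⟨u, hu⟩ : ∃ u, s = u + 1 := ⟨s - 1, by omega⟩
        have h1 : s - 2^k' ≤ u := by omega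
        have h2 : (s - 2^k') * (s - 2^k') ≤ u * u := Nat.mul_le_mul h1 h1
        have h4 : s * s = u*u + 2*u + 1 := by rw [hu]; ring
        omega
      rw [hkk]
      simp only [Nat.add_sub_cancel]
      have e1 : s - 2^(k'+1) + 2^k' = s - 2^k' := by omega
      have e2 : s - 2^(k'+1) + 2^k' + 2^k' = s := by omega
      have l1 : ((List.range n).map (fF R)).getD ((s - 2^k') * (s - 2^k') + k') []
          = tabl R (s - 2^(k'+1)) k' := by
        have h := fF_code R (s - 2^(k'+1)) k'
        rw [e1] at h
        rw [getD_map_range _ hc1lt, h]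
      have l2 : ((List.range n).map (fF R)).getD (s * s + k') []
          = tabl R (s - 2^(k'+1) + 2^k') k' := by
        have h := fF_code R (s - 2^(k'+1) + 2^k') k'
        rw [e2] at h
        rw [getD_map_range _ hc2lt, h]
      rw [l1, l2, tabl_succ R hlo hhi (s - 2^(k'+1)) k']
  · rw [if_neg hv, if_neg hv]

end HindmanAux

namespace HindmanAux

/-- `gcore` with the `R`-value abstracted out, for the computability proof. -/
def pureStep (n r : ℕ) (L : List (List Bool)) : List Bool :=
  if 2^(n - n.sqrt * n.sqrt) ≤ n.sqrt then
    (if n - n.sqrt * n.sqrt = 0 then [false]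
     else
       L.getD ((n.sqrt - 2^(n - n.sqrt * n.sqrt - 1)) * (n.sqrt - 2^(n - n.sqrt * n.sqrt - 1))
           + (n - n.sqrt * n.sqrt - 1)) [] ++
       (L.getD (n.sqrt * n.sqrt + (n - n.sqrt * n.sqrt - 1)) []).map
         (fun b => b ==
           (L.getD (n.sqrt * n.sqrt + (n - n.sqrt * n.sqrt - 1)) []).getD
             (r - 2^(n - n.sqrt * n.sqrt - 1)) false))
  else []

lemma gcore_pure (R : ℕ → ℕ → ℕ) (n : ℕ) (L : List (List Bool)) :
    gcore R n L
      = pureStep n (R (n - n.sqrt * n.sqrt - 1) (n.sqrt - 2^(n - n.sqrt * n.sqrt))) L := rfl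

lemma pureStep_primrec :
    Primrec (fun p : ℕ × ℕ × List (List Bool) => pureStep p.1 p.2.1 p.2.2) := by
  have hpow : Primrec₂ (fun a b : ℕ => a ^ b) := Primrec₂.unpaired'.1 Nat.Primrec.pow
  have pn : Primrec (fun p : ℕ × ℕ × List (List Bool) => p.1) := Primrec.fst
  have pr : Primrec (fun p : ℕ × ℕ × List (List Bool) => p.2.1) := Primrec.fst.comp Primrec.snd
  have pL : Primrec (fun p : ℕ × ℕ × List (List Bool) => p.2.2) := Primrec.snd.comp Primrec.snd
  have ps : Primrec (fun p : ℕ × ℕ × List (List Bool) => p.1.sqrt) := Primrec.nat_sqrt.comp pn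
  have pk : Primrec (fun p : ℕ × ℕ × List (List Bool) => p.1 - p.1.sqrt * p.1.sqrt) :=
    Primrec.nat_sub.comp pn (Primrec.nat_mul.comp ps ps)
  have p2k : Primrec (fun p : ℕ × ℕ × List (List Bool) => 2 ^ (p.1 - p.1.sqrt * p.1.sqrt)) :=
    hpow.comp (Primrec.const 2) pk
  have pk' : Primrec (fun p : ℕ × ℕ × List (List Bool) => p.1 - p.1.sqrt * p.1.sqrt - 1) :=
    Primrec.nat_sub.comp pk (Primrec.const 1)
  have p2k' : Primrec (fun p : ℕ × ℕ × List (List Bool) => 2 ^ (p.1 - p.1.sqrt * p.1.sqrt - 1)) :=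
    hpow.comp (Primrec.const 2) pk'
  have pb : Primrec (fun p : ℕ × ℕ × List (List Bool) =>
      p.1.sqrt - 2 ^ (p.1 - p.1.sqrt * p.1.sqrt - 1)) := Primrec.nat_sub.comp ps p2k'
  have pc1 : Primrec (fun p : ℕ × ℕ × List (List Bool) =>
      (p.1.sqrt - 2 ^ (p.1 - p.1.sqrt * p.1.sqrt - 1)) *
        (p.1.sqrt - 2 ^ (p.1 - p.1.sqrt * p.1.sqrt - 1)) + (p.1 - p.1.sqrt * p.1.sqrt - 1)) :=
    Primrec.nat_add.comp (Primrec.nat_mul.comp pb pb) pk'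
  have pc2 : Primrec (fun p : ℕ × ℕ × List (List Bool) =>
      p.1.sqrt * p.1.sqrt + (p.1 - p.1.sqrt * p.1.sqrt - 1)) :=
    Primrec.nat_add.comp (Primrec.nat_mul.comp ps ps) pk'
  have pt1 : Primrec (fun p : ℕ × ℕ × List (List Bool) =>
      p.2.2.getD ((p.1.sqrt - 2 ^ (p.1 - p.1.sqrt * p.1.sqrt - 1)) *
        (p.1.sqrt - 2 ^ (p.1 - p.1.sqrt * p.1.sqrt - 1)) + (p.1 - p.1.sqrt * p.1.sqrt - 1)) []) :=
    (Primrec.list_getD ([] : List Bool)).comp pL pc1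
  have pt2 : Primrec (fun p : ℕ × ℕ × List (List Bool) =>
      p.2.2.getD (p.1.sqrt * p.1.sqrt + (p.1 - p.1.sqrt * p.1.sqrt - 1)) []) :=
    (Primrec.list_getD ([] : List Bool)).comp pL pc2
  have pidx : Primrec (fun p : ℕ × ℕ × List (List Bool) =>
      p.2.1 - 2 ^ (p.1 - p.1.sqrt * p.1.sqrt - 1)) := Primrec.nat_sub.comp pr p2k'
  have pdel : Primrec (fun p : ℕ × ℕ × List (List Bool) =>
      (p.2.2.getD (p.1.sqrt * p.1.sqrt + (p.1 - p.1.sqrt * p.1.sqrt - 1)) []).getD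
        (p.2.1 - 2 ^ (p.1 - p.1.sqrt * p.1.sqrt - 1)) false) :=
    (Primrec.list_getD false).comp pt2 pidx
  have pmapfn : Primrec₂ (fun (p : ℕ × ℕ × List (List Bool)) (b : Bool) => b ==
      (p.2.2.getD (p.1.sqrt * p.1.sqrt + (p.1 - p.1.sqrt * p.1.sqrt - 1)) []).getD
        (p.2.1 - 2 ^ (p.1 - p.1.sqrt * p.1.sqrt - 1)) false) :=
    Primrec.to₂ ((Primrec.dom_bool₂ (fun d b => b == d)).comp (pdel.comp Primrec.fst) Primrec.snd)
  have pmap : Primrec (fun p : ℕ × ℕ × List (List Bool) =>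
      (p.2.2.getD (p.1.sqrt * p.1.sqrt + (p.1 - p.1.sqrt * p.1.sqrt - 1)) []).map
        (fun b => b ==
          (p.2.2.getD (p.1.sqrt * p.1.sqrt + (p.1 - p.1.sqrt * p.1.sqrt - 1)) []).getD
            (p.2.1 - 2 ^ (p.1 - p.1.sqrt * p.1.sqrt - 1)) false)) :=
    Primrec.list_map pt2 pmapfn
  have papp := Primrec.list_append.comp pt1 pmap
  have pin : Primrec (fun p : ℕ × ℕ × List (List Bool) =>
      if p.1 - p.1.sqrt * p.1.sqrt = 0 then [false] else _) :=
    Primrec.ite (PrimrecRel.comp Primrec.eq pk (Primrec.const 0)) (Primrec.const [false]) papp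
  exact Primrec.ite (PrimrecRel.comp Primrec.nat_le p2k ps) pin (Primrec.const [])

set_option maxHeartbeats 1000000 in
lemma fF_computable (R : ℕ → ℕ → ℕ) (hR : Computable₂ R)
    (hlo : ∀ n w, 2^n ≤ R n w) (hhi : ∀ n w, R n w < 2^(n+1)) :
    Computable (fF R) := by
  have hpow : Primrec₂ (fun a b : ℕ => a ^ b) := Primrec₂.unpaired'.1 Nat.Primrec.pow
  have plen : Primrec (fun L : List (List Bool) => L.length) := Primrec.list_length
  have psq : Primrec (fun L : List (List Bool) => L.length.sqrt) := Primrec.nat_sqrt.comp plen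
  have pkk : Primrec (fun L : List (List Bool) => L.length - L.length.sqrt * L.length.sqrt) :=
    Primrec.nat_sub.comp plen (Primrec.nat_mul.comp psq psq)
  have parg1 : Primrec (fun L : List (List Bool) =>
      L.length - L.length.sqrt * L.length.sqrt - 1) :=
    Primrec.nat_sub.comp pkk (Primrec.const 1)
  have parg2 : Primrec (fun L : List (List Bool) =>
      L.length.sqrt - 2 ^ (L.length - L.length.sqrt * L.length.sqrt)) :=
    Primrec.nat_sub.comp psq (hpow.comp (Primrec.const 2) pkk)
  have hr : Computable (fun L : List (List Bool) =>
      R (L.length - L.length.sqrt * L.length.sqrt - 1)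
        (L.length.sqrt - 2 ^ (L.length - L.length.sqrt * L.length.sqrt))) :=
    hR.comp parg1.to_comp parg2.to_comp
  have hstep : Computable (fun L : List (List Bool) => gcore R L.length L) := by
    have := pureStep_primrec.to_comp.comp
      (Computable.pair plen.to_comp (Computable.pair hr Computable.id))
    exact this.of_eq fun L => (gcore_pure R L.length L).symm
  have hg : Computable₂ (fun (_ : ℕ) (L : List (List Bool)) =>
      (Option.some (gcore R L.length L) : Option (List Bool))) :=
    Computable.to₂ (Computable.option_some.comp (hstep.comp Computable.snd))
  have H : ∀ (a n : ℕ),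
      (fun (_ : ℕ) (L : List (List Bool)) => (Option.some (gcore R L.length L)))
          a ((List.range n).map ((fun (_ : ℕ) (m : ℕ) => fF R m) a))
        = Option.some ((fun (_ : ℕ) (m : ℕ) => fF R m) a n) := by
    intro a n
    have hlen : ((List.range n).map (fF R)).length = n := by simp
    simp only
    rw [hlen, gcore_eq R hlo hhi n]
  have hfF2 : Computable₂ (fun (_ : ℕ) (m : ℕ) => fF R m) :=
    Computable.nat_strong_rec _ hg H
  exact hfF2.comp Computable.id Computable.id

/-- A primitive-recursion-friendly version of `Nat.log 2`. -/
def log2f (x : ℕ) : ℕ :=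
  Nat.rec 0 (fun y IH => if 2^(y+1) ≤ x then IH + 1 else IH) x

lemma log2f_primrec : Primrec log2f := by
  have hpow : Primrec₂ (fun a b : ℕ => a ^ b) := Primrec₂.unpaired'.1 Nat.Primrec.pow
  have h : Primrec₂ (fun (x : ℕ) (p : ℕ × ℕ) => if 2^(p.1+1) ≤ x then p.2 + 1 else p.2) :=
    Primrec.to₂ (Primrec.ite
      (PrimrecRel.comp Primrec.nat_le
        (hpow.comp (Primrec.const 2) (Primrec.succ.comp (Primrec.fst.comp Primrec.snd)))
        Primrec.fst)
      (Primrec.succ.comp (Primrec.snd.comp Primrec.snd))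
      (Primrec.snd.comp Primrec.snd))
  exact (Primrec.nat_rec' Primrec.id (Primrec.const 0) h).of_eq fun x => rfl

lemma log2f_eq (x : ℕ) : log2f x = Nat.log 2 x := by
  rcases Nat.eq_zero_or_pos x with h | h
  · subst h
    show (0:ℕ) = Nat.log 2 0
    simp
  · have haux : ∀ t : ℕ,
        (Nat.rec 0 (fun y IH => if 2^(y+1) ≤ x then IH + 1 else IH) t : ℕ)
          = min (Nat.log 2 x) t := by
      intro t
      induction t with
      | zero => simp
      | succ t ih =>
          have hiff : 2^(t+1) ≤ x ↔ t + 1 ≤ Nat.log 2 x :=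
            (Nat.le_log_iff_pow_le (by norm_num) h.ne').symm
          by_cases hc : 2^(t+1) ≤ x
          · have h1 := hiff.mp hc
            simp only [ih, if_pos hc]
            omega
          · have h2 : ¬ (t + 1 ≤ Nat.log 2 x) := fun hle => hc (hiff.mpr hle)
            simp only [ih, if_neg hc]
            omega
    have hle : Nat.log 2 x ≤ x := Nat.log_le_self 2 x
    rw [log2f, haux x]
    omega

/-- The final coloring. -/
def colc (R : ℕ → ℕ → ℕ) (x : ℕ) : Bool :=
  (fF R ((2 ^ Nat.log 2 x + 2 ^ Nat.log 2 x) * (2 ^ Nat.log 2 x + 2 ^ Nat.log 2 x)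
      + Nat.log 2 x)).getD (x - 2 ^ Nat.log 2 x) false

lemma colc_computable (R : ℕ → ℕ → ℕ) (hR : Computable₂ R)
    (hlo : ∀ n w, 2^n ≤ R n w) (hhi : ∀ n w, R n w < 2^(n+1)) :
    Computable (colc R) := by
  have hpow : Primrec₂ (fun a b : ℕ => a ^ b) := Primrec₂.unpaired'.1 Nat.Primrec.pow
  have hfF := fF_computable R hR hlo hhi
  have p2l : Primrec (fun x : ℕ => 2 ^ log2f x) :=
    hpow.comp (Primrec.const 2) log2f_primrec
  have psum : Primrec (fun x : ℕ => 2 ^ log2f x + 2 ^ log2f x) := Primrec.nat_add.comp p2l p2l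
  have pcode : Primrec (fun x : ℕ =>
      (2 ^ log2f x + 2 ^ log2f x) * (2 ^ log2f x + 2 ^ log2f x) + log2f x) :=
    Primrec.nat_add.comp (Primrec.nat_mul.comp psum psum) log2f_primrec
  have pidx : Primrec (fun x : ℕ => x - 2 ^ log2f x) := Primrec.nat_sub.comp Primrec.id p2l
  have hval : Computable (fun x : ℕ =>
      (fF R ((2 ^ log2f x + 2 ^ log2f x) * (2 ^ log2f x + 2 ^ log2f x) + log2f x)).getD
        (x - 2 ^ log2f x) false) :=
    (Primrec.list_getD false).to_comp.comp (hfF.comp pcode.to_comp) pidx.to_comp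
  exact hval.of_eq fun x => by simp only [colc, log2f_eq]

lemma colc_spec (R : ℕ → ℕ → ℕ) (x m : ℕ) (h1 : 2^m ≤ x) (h2 : x < 2^m + 2^m) :
    colc R x = dcol R (2^m) m x := by
  have hlog : Nat.log 2 x = m :=
    Nat.log_eq_of_pow_le_of_lt_pow h1 (by rw [pow_succ]; omega)
  have hidx : x - 2^m < 2^m := by omega
  rw [colc, hlog, fF_code R (2^m) m, tabl, getD_map_range _ hidx]
  congr 1
  omega

end HindmanAux


theorem stmt0 (R : ℕ → ℕ → ℕ) (hR : Computable₂ R)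
    (hRB : ∀ n w, R n w ∈ Bset n) :
    ∃ c : ℕ → Bool, Computable c ∧
      ∀ w : ℕ, 0 < w → ∀ n < lam w, c w ≠ c (R n w + w) := by
  have hlo : ∀ n w, 2^n ≤ R n w := by
    intro n w
    have h := hRB n w
    have h2 : Nat.log 2 (R n w) = n := h.2
    have h3 := Nat.pow_log_le_self 2 h.1.ne'
    rwa [h2] at h3
  have hhi : ∀ n w, R n w < 2^(n+1) := by
    intro n w
    have h := hRB n w
    have h2 : Nat.log 2 (R n w) = n := h.2
    have h3 := Nat.lt_pow_succ_log_self (b := 2) (by norm_num) (R n w)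
    rwa [h2] at h3
  refine ⟨HindmanAux.colc R, HindmanAux.colc_computable R hR hlo hhi, ?_⟩
  intro w hw n hn
  have hnlam : n < padicValNat 2 w := hn
  set m := Nat.log 2 w with hm
  have h2m : 2^m ≤ w := Nat.pow_log_le_self 2 hw.ne'
  have hw2 : w < 2^(m+1) := Nat.lt_pow_succ_log_self (by norm_num) w
  have h2p : 2^(m+1) = 2^m + 2^m := by rw [pow_succ]; omega
  have hdvd : 2^(n+1) ∣ w :=
    dvd_trans (pow_dvd_pow 2 hnlam) (pow_padicValNat_dvd (p := 2) (n := w))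
  have hR1 := hlo n w
  have hR2 := hhi n w
  have hnm : n + 1 ≤ m + 1 := by
    have h1 : 2^(n+1) ≤ w := Nat.le_of_dvd hw hdvd
    have h2 : 2^(n+1) < 2^(m+1) := lt_of_le_of_lt h1 hw2
    exact le_of_lt ((Nat.pow_lt_pow_iff_right (by norm_num)).mp h2)
  have hxlt : R n w + w < 2^m + 2^m := by
    have hd2 : 2^(n+1) ∣ (2^(m+1) - w) := Nat.dvd_sub (pow_dvd_pow 2 hnm) hdvd
    have hpos : 0 < 2^(m+1) - w := by omega
    have hle2 := Nat.le_of_dvd hpos hd2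
    omega
  have hcw : HindmanAux.colc R w = HindmanAux.dcol R (2^m) m w :=
    HindmanAux.colc_spec R w m h2m (by omega)
  have hcx : HindmanAux.colc R (R n w + w) = HindmanAux.dcol R (2^m) m (R n w + w) :=
    HindmanAux.colc_spec R (R n w + w) m (by omega) hxlt
  rw [hcw, hcx]
  have hflip := HindmanAux.dcol_flip R hlo hhi m (2^m) w n
    (pow_pos (show (0:ℕ) < 2 by norm_num) m) dvd_rfl h2m (by omega) hdvd (by omega)
  rw [show R n w + w = w + R n w from by omega]
  exact hflip
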